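/- Let Z = { x ∈ ℝ_{>0}^{r+s} : ∏_{σ real} x_σ · ∏_{σ complex} x_σ² = 1 }. The image of the unit group O_K^× under the map ξ ↦ (|σ(ξ)|)_{σ∈S} is a cocompact subgroup of the multiplicative group Z; equivalently, there exists a constant C ≥ 1 such that for every x ∈ Z there is a unit ξ ∈ O_K^× with C^{-1} ≤ |σ(ξ)| · x_σ ≤ C for all σ ∈ S. -/

import Mathlib

open NumberField
open scoped Classical
noncomputable section

open NumberField.InfinitePlace NumberField.Units NumberField.Units.dirichletUnitTheorem

variable (K : Type*) [Field K] [NumberField K] in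
/-- Covering lemma: logEmbedding image is cocompact in the hyperplane coordinates. -/
theorem covering : ∃ B : ℝ, 0 ≤ B ∧ ∀ v : ({w : InfinitePlace K // w ≠ (w₀ : InfinitePlace K)} → ℝ),
    ∃ ξ : (𝓞 K)ˣ, ∀ w, |logEmbedding K (Additive.ofMul ξ) w - v w| ≤ B := by
  obtain ⟨t, hts, hsp, hli⟩ := exists_linearIndependent ℝ ((unitLattice K : Set ({w : InfinitePlace K // w ≠ (w₀ : InfinitePlace K)} → ℝ)))
  rw [unitLattice_span_eq_top] at hsp
  have htfin : t.Finite := hli.setFinite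
  haveI := htfin.fintype
  let b : Module.Basis t ℝ ({w : InfinitePlace K // w ≠ (w₀ : InfinitePlace K)} → ℝ) :=
    Module.Basis.mk hli (by rw [Subtype.range_coe]; exact hsp.ge)
  refine ⟨∑ i : t, ‖b i‖, Finset.sum_nonneg fun i _ => norm_nonneg _, fun v => ?_⟩
  set ℓ : {w : InfinitePlace K // w ≠ (w₀ : InfinitePlace K)} → ℝ :=
    ∑ i : t, (round (b.repr v i) : ℤ) • (b i) with hℓ
  have hmem : ℓ ∈ unitLattice K := by
    refine Submodule.sum_mem _ fun i _ => Submodule.smul_mem _ _ ?_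
    have hbi : b i = (i : _) := by simp [b, Module.Basis.coe_mk]
    rw [hbi]
    exact hts i.2
  obtain ⟨a, -, ha⟩ := hmem
  refine ⟨Additive.toMul a, fun w => ?_⟩
  have hlog : logEmbedding K (Additive.ofMul (Additive.toMul a)) = ℓ := ha
  rw [hlog]
  have hvl : ℓ - v = ∑ i : t, ((round (b.repr v i) : ℝ) - b.repr v i) • b i := by
    conv_lhs => rw [hℓ, ← b.sum_repr v]
    rw [← Finset.sum_sub_distrib]
    congr 1; ext i
    rw [sub_smul]; norm_num
  calc |ℓ w - v w| = ‖(ℓ - v) w‖ := by simp [Real.norm_eq_abs]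
    _ ≤ ‖ℓ - v‖ := norm_le_pi_norm _ _
    _ ≤ ∑ i : t, ‖((round (b.repr v i) : ℝ) - b.repr v i) • b i‖ := by
        rw [hvl]; exact norm_sum_le _ _
    _ ≤ ∑ i : t, ‖b i‖ := by
        refine Finset.sum_le_sum fun i _ => ?_
        rw [norm_smul]
        have : ‖(round (b.repr v i) : ℝ) - b.repr v i‖ ≤ 1 := by
          rw [Real.norm_eq_abs, abs_sub_comm]
          exact (abs_sub_round _).trans (by norm_num)
        nlinarith [norm_nonneg (b i)]


/-- The image of the unit group `O_K^×` under `ξ ↦ (|σ(ξ)|)_σ` is cocompact in the group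
`Z = {x ∈ ℝ_{>0}^{r+s} : ∏_{real} x_σ ∏_{complex} x_σ² = 1}`: there is `C ≥ 1` such that every
`x ∈ Z` can be brought within `[C⁻¹, C]` coordinatewise by a unit. -/
theorem units_cocompact (K : Type*) [Field K] [NumberField K] :
    ∃ C : ℝ, 1 ≤ C ∧
      ∀ x : InfinitePlace K → ℝ, (∀ w, 0 < x w) →
        (∏ w ∈ Finset.univ.filter (fun w : InfinitePlace K => w.IsReal), x w) *
          (∏ w ∈ Finset.univ.filter (fun w : InfinitePlace K => w.IsComplex), (x w) ^ 2) = 1 →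
        ∃ ξ : (𝓞 K)ˣ, ∀ w : InfinitePlace K,
          C⁻¹ ≤ w (algebraMap (𝓞 K) K ξ) * x w ∧ w (algebraMap (𝓞 K) K ξ) * x w ≤ C := by
  obtain ⟨B, hB0, hB⟩ := covering K
  set n := Fintype.card (InfinitePlace K) with hn
  have hn1 : 1 ≤ (n : ℝ) := by
    have : 0 < n := Fintype.card_pos
    exact_mod_cast this
  refine ⟨Real.exp (n * B), Real.one_le_exp (by positivity), fun x hx hprod => ?_⟩
  -- the sum identity for x
  have hsumx : ∑ w : InfinitePlace K, (mult w : ℝ) * Real.log (x w) = 0 := by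
    have h := congr_arg Real.log hprod
    rw [Real.log_mul (Finset.prod_pos (fun w _ => hx w)).ne'
        (Finset.prod_pos (fun w _ => pow_pos (hx w) 2)).ne',
      Real.log_prod (fun w _ => (hx w).ne'),
      Real.log_prod (fun w _ => (pow_pos (hx w) 2).ne'), Real.log_one] at h
    simp_rw [Real.log_pow] at h
    rw [← Finset.sum_filter_add_sum_filter_not Finset.univ (fun w : InfinitePlace K => w.IsReal)]
    have e1 : ∑ w ∈ Finset.univ.filter (fun w : InfinitePlace K => w.IsReal),
        (mult w : ℝ) * Real.log (x w)
        = ∑ w ∈ Finset.univ.filter (fun w : InfinitePlace K => w.IsReal), Real.log (x w) := by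
      refine Finset.sum_congr rfl fun w hw => ?_
      simp only [Finset.mem_filter] at hw
      simp [mult, hw.2]
    have e2 : ∑ w ∈ Finset.univ.filter (fun w : InfinitePlace K => ¬ w.IsReal),
        (mult w : ℝ) * Real.log (x w)
        = ∑ w ∈ Finset.univ.filter (fun w : InfinitePlace K => w.IsComplex),
          ((2 : ℕ) : ℝ) * Real.log (x w) := by
      rw [Finset.filter_congr (fun w _ => by rw [not_isReal_iff_isComplex])]
      refine Finset.sum_congr rfl fun w hw => ?_
      simp only [Finset.mem_filter] at hw
      simp [mult, not_isReal_iff_isComplex.mpr hw.2]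
    rw [e1, e2, h]
  -- choose the unit
  obtain ⟨ξ, hξ⟩ := hB (fun w => -((mult w.1 : ℝ) * Real.log (x w.1)))
  refine ⟨ξ, fun w => ?_⟩
  set ξK : K := algebraMap (𝓞 K) K ξ with hξK
  have hξK0 : ξK ≠ 0 := RingOfIntegers.coe_ne_zero_iff.mpr (Units.ne_zero ξ)
  set f : InfinitePlace K → ℝ :=
    fun w => (mult w : ℝ) * (Real.log (w ξK) + Real.log (x w)) with hf
  have hf_ne : ∀ w : InfinitePlace K, w ≠ w₀ → |f w| ≤ B := by
    intro w hw
    have h := hξ ⟨w, hw⟩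
    rw [logEmbedding_component] at h
    have : (mult w : ℝ) * Real.log (w ξK) - -((mult w : ℝ) * Real.log (x w)) = f w := by
      rw [hf]; ring
    rwa [this] at h
  have hsumξ : ∑ w : InfinitePlace K, (mult w : ℝ) * Real.log (w ξK) = 0 := by
    rw [← Finset.add_sum_erase _ _ (Finset.mem_univ (w₀ : InfinitePlace K)),
      Finset.sum_subtype (p := fun w : InfinitePlace K => w ≠ (w₀ : InfinitePlace K))
        (Finset.univ.erase (w₀ : InfinitePlace K))
        (fun w => by simp [Finset.mem_erase]) (fun w => (mult w : ℝ) * Real.log (w ξK))]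
    have h := sum_logEmbedding_component (K := K) ξ
    simp_rw [logEmbedding_component] at h
    rw [h]; ring
  have hsumf : ∑ w : InfinitePlace K, f w = 0 := by
    simp only [hf, mul_add]
    rw [Finset.sum_add_distrib, hsumξ, hsumx, add_zero]
  have hmult : ∀ w : InfinitePlace K, (1 : ℝ) ≤ (mult w : ℝ) := by
    intro w
    exact_mod_cast Nat.one_le_iff_ne_zero.mpr mult_pos.ne'
  have hf_all : ∀ w : InfinitePlace K, |f w| ≤ n * B := by
    intro w
    by_cases hw : w = w₀
    · have : f w = -∑ u ∈ Finset.univ.erase w, f u := by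
        rw [eq_neg_iff_add_eq_zero, Finset.add_sum_erase _ _ (Finset.mem_univ w), hsumf]
      rw [this, abs_neg]
      calc |∑ u ∈ Finset.univ.erase w, f u| ≤ ∑ u ∈ Finset.univ.erase w, |f u| :=
            Finset.abs_sum_le_sum_abs _ _
        _ ≤ ∑ _u ∈ Finset.univ.erase w, B := by
            refine Finset.sum_le_sum fun u hu => ?_
            exact hf_ne u (by rw [← hw]; exact (Finset.mem_erase.mp hu).1)
        _ = (Finset.univ.erase w).card * B := by rw [Finset.sum_const, nsmul_eq_mul]
        _ ≤ n * B := by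
            refine mul_le_mul_of_nonneg_right ?_ hB0
            have := Finset.card_erase_le (s := (Finset.univ : Finset (InfinitePlace K))) (a := w)
            rw [Finset.card_univ] at this
            exact_mod_cast this
    · calc |f w| ≤ B := hf_ne w hw
        _ = 1 * B := (one_mul B).symm
        _ ≤ n * B := mul_le_mul_of_nonneg_right hn1 hB0
  -- conclude
  have hwpos : 0 < w ξK := pos_iff.mpr hξK0
  have hlog : |Real.log (w ξK) + Real.log (x w)| ≤ n * B := by
    have h := hf_all w
    rw [hf, abs_mul, Nat.abs_cast] at h
    nlinarith [hmult w, abs_nonneg (Real.log (w ξK) + Real.log (x w))]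
  have hexp : w ξK * x w = Real.exp (Real.log (w ξK) + Real.log (x w)) := by
    rw [Real.exp_add, Real.exp_log hwpos, Real.exp_log (hx w)]
  rw [abs_le] at hlog
  constructor
  · rw [hexp, ← Real.exp_neg]
    exact Real.exp_le_exp.mpr hlog.1
  · rw [hexp]
    exact Real.exp_le_exp.mpr hlog.2
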